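/- arXiv:1608.01216 — 2 statements merged into one kernel-verified Lean document; each statement's English description precedes it below -/
import Mathlib

section
/- Let d, d̄ ∈ ℝ³ be linearly independent and let F : ℝ³ → ℝ be continuously differentiable. If ∇F(x)·((x·d)d̄ − (x·d̄)d) = 0 for every x ∈ S, then F is constant on each circle of latitude relative to the axis d × d̄; that is, F(x) = F(z) whenever x, z ∈ S satisfy x·(d × d̄) = z·(d × d̄). -/
open scoped RealInnerProductSpace

noncomputable section

abbrev E3 := EuclideanSpace ℝ (Fin 3)

/-- The unit sphere `S = {x ∈ ℝ³ : |x| = 1}`. -/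
def sphS : Set E3 := Metric.sphere 0 1

/-- Cross product on `ℝ³`. -/
def cross3 (a b : E3) : E3 :=
  (EuclideanSpace.equiv (Fin 3) ℝ).symm
    ![a 1 * b 2 - a 2 * b 1, a 2 * b 0 - a 0 * b 2, a 0 * b 1 - a 1 * b 0]

lemma cross3_apply (a b : E3) (i : Fin 3) :
    cross3 a b i = ![a 1 * b 2 - a 2 * b 1, a 2 * b 0 - a 0 * b 2, a 0 * b 1 - a 1 * b 0] i := rfl

lemma inner3 (a b : E3) : ⟪a, b⟫ = a 0 * b 0 + a 1 * b 1 + a 2 * b 2 := by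
  simp [PiLp.inner_apply, Fin.sum_univ_three]; ring

lemma triple (a b c : E3) : cross3 (cross3 a b) c = ⟪a,c⟫ • b - ⟪b,c⟫ • a := by
  ext i
  fin_cases i <;>
    simp [cross3_apply, inner3, Fin.sum_univ_three, PiLp.smul_apply, PiLp.sub_apply,
      smul_eq_mul] <;> ring

lemma triple' (a b c : E3) : cross3 a (cross3 b c) = ⟪a,c⟫ • b - ⟪a,b⟫ • c := by
  ext i
  fin_cases i <;>
    simp [cross3_apply, inner3, Fin.sum_univ_three, PiLp.smul_apply, PiLp.sub_apply,
      smul_eq_mul] <;> ring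

lemma lagrange (a b : E3) : ⟪cross3 a b, cross3 a b⟫ = ⟪a,a⟫*⟪b,b⟫ - ⟪a,b⟫^2 := by
  simp only [inner3]; simp [cross3_apply, Fin.sum_univ_three]; ring

lemma inner_self_cross3 (a b : E3) : ⟪a, cross3 a b⟫ = 0 := by
  simp [cross3_apply, inner3, Fin.sum_univ_three]; ring

lemma inner_right_cross3 (a b : E3) : ⟪b, cross3 a b⟫ = 0 := by
  simp [cross3_apply, inner3, Fin.sum_univ_three]; ring

lemma cross3_smul_left (s : ℝ) (a b : E3) : cross3 (s • a) b = s • cross3 a b := by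
  ext i
  fin_cases i <;> simp [cross3_apply, PiLp.smul_apply, smul_eq_mul] <;> ring

lemma cross3_smul_right (s : ℝ) (a b : E3) : cross3 a (s • b) = s • cross3 a b := by
  ext i
  fin_cases i <;> simp [cross3_apply, PiLp.smul_apply, smul_eq_mul] <;> ring

lemma cross3_add_right (a b c : E3) : cross3 a (b + c) = cross3 a b + cross3 a c := by
  ext i
  fin_cases i <;> simp [cross3_apply, PiLp.add_apply, smul_eq_mul] <;> ring

lemma cross3_sub_right (a b c : E3) : cross3 a (b - c) = cross3 a b - cross3 a c := by
  ext i
  fin_cases i <;> simp [cross3_apply, PiLp.sub_apply, smul_eq_mul] <;> ring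

lemma cross3_self (a : E3) : cross3 a a = 0 := by
  ext i
  fin_cases i <;> simp [cross3_apply] <;> ring

lemma cross3_zero_left (b : E3) : cross3 0 b = 0 := by
  ext i
  fin_cases i <;> simp [cross3_apply]

/- generic inner-product expansion lemmas, proved in coordinates -/

lemma inner_sub_smul (v u : E3) (t : ℝ) :
    ⟪v - t • u, v - t • u⟫ = ⟪v,v⟫ - 2*t*⟪v,u⟫ + t^2*⟪u,u⟫ := by
  simp only [inner3]; simp [PiLp.sub_apply, PiLp.smul_apply, Fin.sum_univ_three]; ring

lemma inner_left_sub_smul (u v : E3) (t : ℝ) :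
    ⟪u, v - t • u⟫ = ⟪u,v⟫ - t*⟪u,u⟫ := by
  simp only [inner3]; simp [PiLp.sub_apply, PiLp.smul_apply, Fin.sum_univ_three]; ring

lemma inner_sub_smul_left (v u q : E3) (t : ℝ) :
    ⟪v - t • u, q⟫ = ⟪v,q⟫ - t*⟪u,q⟫ := by
  simp [inner3, PiLp.sub_apply, PiLp.smul_apply, Fin.sum_univ_three]; ring

lemma inner_sub_comb (r w p q : E3) (a b : ℝ) :
    ⟪r, w - a • p - b • q⟫ = ⟪r,w⟫ - a*⟪r,p⟫ - b*⟪r,q⟫ := by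
  simp [inner3, PiLp.sub_apply, PiLp.smul_apply, Fin.sum_univ_three]; ring

lemma inner_comb2 (p q : E3) (a b : ℝ) :
    ⟪a • p + b • q, a • p + b • q⟫ = a^2*⟪p,p⟫ + 2*a*b*⟪p,q⟫ + b^2*⟪q,q⟫ := by
  simp only [inner3]; simp [PiLp.add_apply, PiLp.smul_apply, Fin.sum_univ_three]; ring

lemma inner_comb3 (u p q : E3) (s a b : ℝ) :
    ⟪s • u + a • p + b • q, s • u + a • p + b • q⟫ =
      s^2*⟪u,u⟫ + a^2*⟪p,p⟫ + b^2*⟪q,q⟫ + 2*s*a*⟪u,p⟫ + 2*s*b*⟪u,q⟫ + 2*a*b*⟪p,q⟫ := by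
  simp only [inner3]; simp [PiLp.add_apply, PiLp.smul_apply, Fin.sum_univ_three]; ring

/-- A vector orthogonal to `u`, `p` and `u × p` vanishes provided `u × p ≠ 0`. -/
lemma eq_zero_of_orth (u p r : E3) (hq : ⟪cross3 u p, cross3 u p⟫ ≠ 0)
    (h1 : ⟪u, r⟫ = 0) (h2 : ⟪p, r⟫ = 0) (h3 : ⟪cross3 u p, r⟫ = 0) : r = 0 := by
  have hcr : cross3 (cross3 u p) r = 0 := by
    rw [triple, h1, h2]; simp
  have hl := lagrange (cross3 u p) r
  rw [hcr, h3] at hl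
  simp only [inner_zero_left] at hl
  have : ⟪r, r⟫ = 0 := by
    rcases mul_eq_zero.mp (by linarith : ⟪cross3 u p, cross3 u p⟫ * ⟪r, r⟫ = 0) with h | h
    · exact absurd h hq
    · exact h
  exact inner_self_eq_zero.mp this

lemma mem_sphS_iff (v : E3) : v ∈ sphS ↔ ⟪v, v⟫ = 1 := by
  rw [sphS, mem_sphere_zero_iff_norm, real_inner_self_eq_norm_mul_norm]
  constructor
  · intro h; rw [h]; ring
  · intro h
    have h0 := norm_nonneg v
    nlinarith

lemma exists_cos_sin {a b : ℝ} (hab : a ^ 2 + b ^ 2 = 1) :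
    ∃ θ : ℝ, Real.cos θ = a ∧ Real.sin θ = b := by
  have ha1 : -1 ≤ a := by nlinarith
  have ha2 : a ≤ 1 := by nlinarith
  have hsq : Real.sqrt (1 - a ^ 2) = |b| := by
    rw [show (1 : ℝ) - a ^ 2 = b ^ 2 by linarith, Real.sqrt_sq_eq_abs]
  rcases le_or_gt 0 b with hb | hb
  · exact ⟨Real.arccos a, Real.cos_arccos ha1 ha2, by
      rw [Real.sin_arccos, hsq, abs_of_nonneg hb]⟩
  · exact ⟨-Real.arccos a, by rw [Real.cos_neg]; exact Real.cos_arccos ha1 ha2, by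
      rw [Real.sin_neg, Real.sin_arccos, hsq, abs_of_neg hb]; ring⟩

/-- **Characteristic curves.** If the derivative of a `C¹` function `F` vanishes along
the tangential field `x ↦ (x·d)d̄ − (x·d̄)d` on the sphere, then `F` is constant on each
circle of latitude relative to the axis `d × d̄`. -/
theorem constant_on_latitude_circles
    (d dbar : E3) (hind : LinearIndependent ℝ ![d, dbar])
    (F : E3 → ℝ) (hF : ContDiff ℝ 1 F)
    (hvanish : ∀ x ∈ sphS, ⟪gradient F x, ⟪x, d⟫ • dbar - ⟪x, dbar⟫ • d⟫ = 0) :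
    ∀ x ∈ sphS, ∀ z ∈ sphS,
      ⟪x, cross3 d dbar⟫ = ⟪z, cross3 d dbar⟫ → F x = F z := by
  intro x hx z hz hlat
  obtain ⟨n, hn_def⟩ : ∃ n : E3, n = cross3 d dbar := ⟨_, rfl⟩
  rw [← hn_def] at hlat
  -- n ≠ 0
  have hd0 : d ≠ 0 := by
    have := hind.ne_zero 0
    simpa using this
  have hn0 : n ≠ 0 := by
    intro h
    have htr := triple d dbar d
    rw [← hn_def, h, cross3_zero_left] at htr
    have hrel : (-⟪dbar, d⟫) • d + ⟪d, d⟫ • dbar = 0 := by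
      rw [neg_smul, add_comm, ← sub_eq_add_neg]
      exact htr.symm
    have := (LinearIndependent.pair_iff.mp hind (-⟪dbar, d⟫) ⟪d, d⟫ hrel).2
    exact hd0 (inner_self_eq_zero.mp this)
  have hnn : ‖n‖ ≠ 0 := norm_ne_zero_iff.mpr hn0
  obtain ⟨u, hu_def⟩ : ∃ u : E3, u = ‖n‖⁻¹ • n := ⟨_, rfl⟩
  have huu : ⟪u, u⟫ = 1 := by
    rw [hu_def, real_inner_smul_left, real_inner_smul_right,
      real_inner_self_eq_norm_mul_norm]
    field_simp
  obtain ⟨t, ht_def⟩ : ∃ t : ℝ, t = ⟪x, u⟫ := ⟨_, rfl⟩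
  have hxu : ⟪x, u⟫ = t := ht_def.symm
  have hux : ⟪u, x⟫ = t := by rw [real_inner_comm]; exact hxu
  have hzu : ⟪z, u⟫ = t := by
    rw [ht_def, hu_def, real_inner_smul_right, real_inner_smul_right, hlat]
  have huz : ⟪u, z⟫ = t := by rw [real_inner_comm]; exact hzu
  have hxx : ⟪x, x⟫ = 1 := (mem_sphS_iff x).mp hx
  have hzz : ⟪z, z⟫ = 1 := (mem_sphS_iff z).mp hz
  obtain ⟨p, hp_def⟩ : ∃ p : E3, p = x - t • u := ⟨_, rfl⟩
  obtain ⟨q, hq_def⟩ : ∃ q : E3, q = cross3 u x := ⟨_, rfl⟩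
  have hup : ⟪u, p⟫ = 0 := by
    rw [hp_def, inner_left_sub_smul, hux, huu]; ring
  have huq : ⟪u, q⟫ = 0 := by rw [hq_def]; exact inner_self_cross3 u x
  have hxq : ⟪x, q⟫ = 0 := by rw [hq_def]; exact inner_right_cross3 u x
  have hpq : ⟪p, q⟫ = 0 := by
    rw [hp_def, inner_sub_smul_left, hxq, huq]; ring
  have hpp : ⟪p, p⟫ = 1 - t ^ 2 := by
    rw [hp_def, inner_sub_smul, hxx, hxu, huu]; ring
  have hqq : ⟪q, q⟫ = 1 - t ^ 2 := by
    rw [hq_def, lagrange, huu, hxx, hux]; ring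
  have hupq : cross3 u p = q := by
    rw [hp_def, cross3_sub_right, cross3_smul_right, cross3_self, smul_zero, sub_zero, hq_def]
  have huq' : cross3 u q = -p := by
    rw [hq_def, triple', hux, huu, one_smul, hp_def, neg_sub]
  -- the flow
  obtain ⟨c, hcfun⟩ : ∃ c : ℝ → E3,
      c = fun θ => t • u + Real.cos θ • p + Real.sin θ • q := ⟨_, rfl⟩
  have hc : ∀ θ, c θ = t • u + Real.cos θ • p + Real.sin θ • q := by
    intro θ; rw [hcfun]
  have hcsph : ∀ θ, c θ ∈ sphS := by
    intro θ
    rw [mem_sphS_iff, hc θ, inner_comb3, huu, hpp, hqq, hup, huq, hpq]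
    nlinarith [Real.sin_sq_add_cos_sq θ]
  have hc0 : c 0 = x := by
    rw [hc 0]
    simp only [Real.cos_zero, Real.sin_zero, one_smul, zero_smul, add_zero, hp_def]
    abel
  -- derivative of the flow
  have hcderiv : ∀ θ, HasDerivAt c (-Real.sin θ • p + Real.cos θ • q) θ := by
    intro θ
    rw [hcfun]
    exact ((Real.hasDerivAt_cos θ).smul_const p |>.const_add (t • u)).add
      ((Real.hasDerivAt_sin θ).smul_const q)
  -- the derivative vector is the characteristic field (rescaled)
  have hcross_c : ∀ θ, cross3 u (c θ) = -Real.sin θ • p + Real.cos θ • q := by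
    intro θ
    rw [hc θ, cross3_add_right, cross3_add_right, cross3_smul_right, cross3_smul_right,
      cross3_smul_right, cross3_self, smul_zero, hupq, huq', smul_neg, ← neg_smul]
    abel
  have hfield : ∀ θ, -Real.sin θ • p + Real.cos θ • q
      = ‖n‖⁻¹ • (⟪c θ, d⟫ • dbar - ⟪c θ, dbar⟫ • d) := by
    intro θ
    have htr : ⟪c θ, d⟫ • dbar - ⟪c θ, dbar⟫ • d = cross3 n (c θ) := by
      rw [hn_def, triple, real_inner_comm d (c θ), real_inner_comm dbar (c θ)]
    rw [htr, ← cross3_smul_left, ← hu_def, hcross_c θ]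
  -- F ∘ c has zero derivative
  have hgrad : ∀ (y w : E3), fderiv ℝ F y w = ⟪gradient F y, w⟫ := by
    intro y w
    rw [gradient, InnerProductSpace.toDual_symm_apply]
  obtain ⟨g, hgfun⟩ : ∃ g : ℝ → ℝ, g = fun θ => F (c θ) := ⟨_, rfl⟩
  have hg : ∀ θ, HasDerivAt g 0 θ := by
    intro θ
    have hFd : HasFDerivAt F (fderiv ℝ F (c θ)) (c θ) :=
      (hF.differentiable one_ne_zero (c θ)).hasFDerivAt
    have hcomp := hFd.comp_hasDerivAt θ (hcderiv θ)
    have hval : fderiv ℝ F (c θ) (-Real.sin θ • p + Real.cos θ • q) = 0 := by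
      rw [hgrad, hfield θ, real_inner_smul_right, hvanish (c θ) (hcsph θ)]
      ring
    rw [hval] at hcomp
    rw [hgfun]
    exact hcomp
  have hgconst : ∀ θ, g θ = g 0 :=
    fun θ => is_const_of_deriv_eq_zero (fun s => (hg s).differentiableAt)
      (fun s => (hg s).deriv) θ 0
  -- geometry: z lies on the flow through x
  obtain ⟨w, hw_def⟩ : ∃ w : E3, w = z - t • u := ⟨_, rfl⟩
  have huw : ⟪u, w⟫ = 0 := by
    rw [hw_def, inner_left_sub_smul, huz, huu]; ring
  have hww : ⟪w, w⟫ = 1 - t ^ 2 := by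
    rw [hw_def, inner_sub_smul, hzz, hzu, huu]; ring
  by_cases hs : (1 : ℝ) - t ^ 2 = 0
  · -- degenerate latitude: x = z
    have hp0 : p = 0 := inner_self_eq_zero.mp (by rw [hpp, hs])
    have hw0 : w = 0 := inner_self_eq_zero.mp (by rw [hww, hs])
    have h1 : x = t • u := by
      rw [hp_def] at hp0; rwa [sub_eq_zero] at hp0
    have h2 : z = t • u := by
      rw [hw_def] at hw0; rwa [sub_eq_zero] at hw0
    rw [h1, h2]
  · have hspos : (0 : ℝ) < 1 - t ^ 2 := by
      have h : (0:ℝ) ≤ ⟪p,p⟫ := real_inner_self_nonneg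
      rw [hpp] at h
      exact lt_of_le_of_ne h (fun heq => hs heq.symm)
    obtain ⟨a, ha_def⟩ : ∃ a : ℝ, a = ⟪w, p⟫ / (1 - t ^ 2) := ⟨_, rfl⟩
    obtain ⟨b, hb_def⟩ : ∃ b : ℝ, b = ⟪w, q⟫ / (1 - t ^ 2) := ⟨_, rfl⟩
    obtain ⟨r, hr_def⟩ : ∃ r : E3, r = w - a • p - b • q := ⟨_, rfl⟩
    have hur : ⟪u, r⟫ = 0 := by
      rw [hr_def, inner_sub_comb, huw, hup, huq]; ring
    have hpr : ⟪p, r⟫ = 0 := by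
      rw [hr_def, inner_sub_comb, real_inner_comm w p, hpp, hpq, ha_def]
      field_simp
      ring
    have hqr : ⟪q, r⟫ = 0 := by
      rw [hr_def, inner_sub_comb, real_inner_comm w q, real_inner_comm p q, hpq, hqq, hb_def]
      field_simp
      ring
    have hq_ne : ⟪cross3 u p, cross3 u p⟫ ≠ 0 := by
      rw [hupq, hqq]; exact hs
    have hr0 : r = 0 := eq_zero_of_orth u p r hq_ne hur hpr (by rw [hupq]; exact hqr)
    have hw_eq : w = a • p + b • q := by
      rw [hr_def, sub_sub, sub_eq_zero] at hr0
      exact hr0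
    have hab : a ^ 2 + b ^ 2 = 1 := by
      have hexp := inner_comb2 p q a b
      rw [← hw_eq, hww, hpp, hqq, hpq] at hexp
      have hcancel : (a ^ 2 + b ^ 2) * (1 - t ^ 2) = 1 * (1 - t ^ 2) := by linarith
      exact mul_right_cancel₀ hs hcancel
    obtain ⟨θ, hcos, hsin⟩ := exists_cos_sin hab
    have hcθ : c θ = z := by
      rw [hc θ, hcos, hsin, add_assoc, ← hw_eq, hw_def]
      abel
    have h0 : g 0 = F x := by rw [hgfun]; simp only [hc0]
    have hθ : g θ = F z := by rw [hgfun]; simp only [hcθ]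
    rw [← h0, ← hθ, hgconst θ]
end
end

section
/- Let f : ℝ³ → ℝ be continuously differentiable. Then the tangential vector field m(y) = y × ∇f(y) on S is silent from both inside and outside: for every x ∈ ℝ³ with |x| ≠ 1, ∫_S (y × ∇f(y)) · (x−y)/|x−y|³ dσ(y) = 0. -/
open MeasureTheory
open scoped RealInnerProductSpace

noncomputable section

section Aux
open NormedSpace
open scoped ENNReal NNReal

def crossCLM (x : E3) : E3 →L[ℝ] E3 :=
  LinearMap.toContinuousLinearMap
  { toFun := fun y => cross3 x y
    map_add' := by
      intro a b; ext i; fin_cases i <;> simp [cross3] <;> ring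
    map_smul' := by
      intro c a; ext i; fin_cases i <;> simp [cross3] <;> ring }

lemma crossCLM_apply (x y : E3) : crossCLM x y = cross3 x y := rfl

lemma cross_skew (x u v : E3) : ⟪cross3 x u, v⟫ = -⟪u, cross3 x v⟫ := by
  simp [cross3, PiLp.inner_apply, Fin.sum_univ_three, RCLike.inner_apply]
  ring

lemma cross_inner_left (a b : E3) : ⟪cross3 a b, a⟫ = 0 := by
  simp [cross3, PiLp.inner_apply, Fin.sum_univ_three, RCLike.inner_apply]
  ring

lemma cross_self_inner (x u : E3) : ⟪cross3 x u, u⟫ = 0 := by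
  simp [cross3, PiLp.inner_apply, Fin.sum_univ_three, RCLike.inner_apply]
  ring

example (x : E3) (t : ℝ) (y : E3) :
    HasDerivAt (fun t : ℝ => exp (t • crossCLM x) y)
      (crossCLM x (exp (t • crossCLM x) y)) t := by
  have h := hasDerivAt_exp_smul_const' (𝕂 := ℝ) (crossCLM x) t
  have := h.clm_apply (hasDerivAt_const t y)
  simpa using this

section Rot
variable (x : E3)

/-- rotation at time t -/
def Rot (t : ℝ) : E3 →L[ℝ] E3 := exp (t • crossCLM x)

lemma hasDerivAt_Rot (t : ℝ) (y : E3) :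
    HasDerivAt (fun t : ℝ => Rot x t y) (crossCLM x (Rot x t y)) t := by
  have h := hasDerivAt_exp_smul_const' (𝕂 := ℝ) (crossCLM x) t
  have := h.clm_apply (hasDerivAt_const t y)
  simpa [Rot] using this

lemma Rot_zero (y : E3) : Rot x 0 y = y := by
  rw [Rot]
  have : (0:ℝ) • crossCLM x = 0 := by ext z; simp
  rw [this, exp_zero]; rfl

lemma Rot_norm (t : ℝ) (y : E3) : ‖Rot x t y‖ = ‖y‖ := by
  have hd : ∀ s : ℝ, HasDerivAt (fun t : ℝ => ⟪Rot x t y, Rot x t y⟫ : ℝ → ℝ) 0 s := by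
    intro s
    have h := (hasDerivAt_Rot x s y).inner ℝ (hasDerivAt_Rot x s y)
    have hz : ⟪Rot x s y, crossCLM x (Rot x s y)⟫ + ⟪crossCLM x (Rot x s y), Rot x s y⟫ = 0 := by
      rw [real_inner_comm]
      have := cross_self_inner x (Rot x s y)
      simp only [crossCLM_apply]
      linarith
    rwa [hz] at h
  have hc : ⟪Rot x t y, Rot x t y⟫ = ⟪Rot x 0 y, Rot x 0 y⟫ :=
    is_const_of_deriv_eq_zero (fun s => (hd s).differentiableAt)
      (fun s => (hd s).deriv) t 0
  rw [Rot_zero] at hc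
  have h1 : ‖Rot x t y‖ ^ 2 = ‖y‖ ^ 2 := by
    rw [← real_inner_self_eq_norm_sq, ← real_inner_self_eq_norm_sq, hc]
  nlinarith [norm_nonneg (Rot x t y), norm_nonneg y]

lemma Rot_fix (t : ℝ) : Rot x t x = x := by
  have hd : ∀ s : ℝ, HasDerivAt (fun t : ℝ => ⟪Rot x t x - x, Rot x t x - x⟫ : ℝ → ℝ) 0 s := by
    intro s
    have h1 : HasDerivAt (fun t : ℝ => Rot x t x - x) (crossCLM x (Rot x s x)) s := by
      simpa using (hasDerivAt_Rot x s x).sub_const x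
    have h := h1.inner ℝ h1
    have hz : ⟪Rot x s x - x, crossCLM x (Rot x s x)⟫
        + ⟪crossCLM x (Rot x s x), Rot x s x - x⟫ = 0 := by
      rw [real_inner_comm]
      have h2 : ⟪crossCLM x (Rot x s x), Rot x s x - x⟫ = 0 := by
        rw [inner_sub_right]
        have ha := cross_self_inner x (Rot x s x)
        have hb : ⟪cross3 x (Rot x s x), x⟫ = 0 := cross_inner_left x (Rot x s x)
        simp only [crossCLM_apply]
        rw [ha, hb]; ring
      rw [h2]; ring
    rwa [hz] at h
  have hc : ⟪Rot x t x - x, Rot x t x - x⟫ = ⟪Rot x 0 x - x, Rot x 0 x - x⟫ :=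
    is_const_of_deriv_eq_zero (fun s => (hd s).differentiableAt)
      (fun s => (hd s).deriv) t 0
  rw [Rot_zero] at hc
  simp only [sub_self, inner_zero_right] at hc
  have := real_inner_self_eq_norm_sq (Rot x t x - x)
  have hnorm : ‖Rot x t x - x‖ ^ 2 = 0 := by rw [← this, hc]
  have : Rot x t x - x = 0 := by
    have := pow_eq_zero_iff (n := 2) (by norm_num) |>.mp hnorm
    exact norm_eq_zero.mp this
  exact sub_eq_zero.mp this

lemma Rot_add (s t : ℝ) : Rot x (s + t) = Rot x s * Rot x t := by
  rw [Rot, Rot, Rot]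
  have hadd : (s + t) • crossCLM x = s • crossCLM x + t • crossCLM x := by
    ext z; simp [add_smul]
  rw [hadd]
  refine exp_add_of_commute_of_mem_ball (𝕂 := ℝ) ?_ ((expSeries_radius_eq_top ℝ (E3 →L[ℝ] E3)).symm ▸ edist_lt_top _ _)
    ((expSeries_radius_eq_top ℝ (E3 →L[ℝ] E3)).symm ▸ edist_lt_top _ _)
  show _ = _
  ext z
  simp [ContinuousLinearMap.mul_apply, _root_.map_smul]; ring

lemma Rot_inv (t : ℝ) (y : E3) : Rot x (-t) (Rot x t y) = y := by
  have h : Rot x (-t) * Rot x t = 1 := by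
    rw [← Rot_add]
    simp only [neg_add_cancel]
    rw [Rot]
    have : (0:ℝ) • crossCLM x = 0 := by ext z; simp
    rw [this, exp_zero]
  calc (Rot x (-t)) ((Rot x t) y) = (Rot x (-t) * Rot x t) y := rfl
    _ = y := by rw [h]; rfl

/-- rotation as an isometry equivalence -/
def RotIso (t : ℝ) : E3 ≃ᵢ E3 where
  toFun := Rot x t
  invFun := Rot x (-t)
  left_inv := fun y => Rot_inv x t y
  right_inv := fun y => by simpa using Rot_inv x (-t) y
  isometry_toFun := by
    intro a b
    simp only [edist_dist, dist_eq_norm]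
    rw [← map_sub, Rot_norm]

lemma Rot_preimage_sph (t : ℝ) : (Rot x t) ⁻¹' sphS = sphS := by
  ext y
  simp only [Set.mem_preimage, sphS, Metric.mem_sphere, dist_zero_right]
  rw [Rot_norm]

lemma Rot_measurePreserving (t : ℝ) :
    MeasurePreserving (Rot x t) (μH[2].restrict sphS) (μH[2].restrict sphS) := by
  constructor
  · exact (Rot x t).continuous.measurable
  · have hs : MeasurableSet sphS := (Metric.isClosed_sphere).measurableSet
    conv_lhs => rw [← Rot_preimage_sph x t]
    rw [← Measure.restrict_map (Rot x t).continuous.measurable hs]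
    have hmap : Measure.map (⇑(Rot x t)) (μH[2] : Measure E3) = μH[2] :=
      (RotIso x t).map_hausdorffMeasure 2
    rw [hmap]

end Rot

/-- spherical coordinates -/
def sphCoord (p : Fin 2 → ℝ) : E3 :=
  (EuclideanSpace.equiv (Fin 3) ℝ).symm
    ![Real.cos (p 0), Real.sin (p 0) * Real.cos (p 1), Real.sin (p 0) * Real.sin (p 1)]

lemma lip_sin : LipschitzWith 1 Real.sin :=
  lipschitzWith_of_nnnorm_deriv_le Real.differentiable_sin (fun x => by
    rw [Real.deriv_sin]
    rw [← NNReal.coe_le_coe, coe_nnnorm, Real.norm_eq_abs, NNReal.coe_one]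
    exact Real.abs_cos_le_one x)

lemma lip_cos : LipschitzWith 1 Real.cos :=
  lipschitzWith_of_nnnorm_deriv_le Real.differentiable_cos (fun x => by
    rw [Real.deriv_cos]
    rw [← NNReal.coe_le_coe, coe_nnnorm, Real.norm_eq_abs, NNReal.coe_one]
    exact (abs_neg (Real.sin x)).le.trans (Real.abs_sin_le_one x))

lemma sphCoord_lipschitz : LipschitzWith 3 sphCoord := by
  apply LipschitzWith.of_dist_le_mul
  intro p q
  set d := dist p q with hd
  have hdnn : 0 ≤ d := dist_nonneg
  have h0 : |p 0 - q 0| ≤ d := by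
    simpa [Real.dist_eq] using dist_le_pi_dist p q 0
  have h1 : |p 1 - q 1| ≤ d := by
    simpa [Real.dist_eq] using dist_le_pi_dist p q 1
  have hcos0 : |Real.cos (p 0) - Real.cos (q 0)| ≤ d := by
    have := lip_cos.dist_le_mul (p 0) (q 0)
    simp only [Real.dist_eq, NNReal.coe_one, one_mul] at this
    exact this.trans h0
  have hsin0 : |Real.sin (p 0) - Real.sin (q 0)| ≤ d := by
    have := lip_sin.dist_le_mul (p 0) (q 0)
    simp only [Real.dist_eq, NNReal.coe_one, one_mul] at this
    exact this.trans h0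
  have hcos1 : |Real.cos (p 1) - Real.cos (q 1)| ≤ d := by
    have := lip_cos.dist_le_mul (p 1) (q 1)
    simp only [Real.dist_eq, NNReal.coe_one, one_mul] at this
    exact this.trans h1
  have hsin1 : |Real.sin (p 1) - Real.sin (q 1)| ≤ d := by
    have := lip_sin.dist_le_mul (p 1) (q 1)
    simp only [Real.dist_eq, NNReal.coe_one, one_mul] at this
    exact this.trans h1
  have key : ∀ (s s' c c' : ℝ), |s| ≤ 1 → |s'| ≤ 1 → |c| ≤ 1 → |c'| ≤ 1 →
      |s - s'| ≤ d → |c - c'| ≤ d → |s * c - s' * c'| ≤ 2 * d := by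
    intro s s' c c' hs hs' hc hc' hss hcc
    have : s * c - s' * c' = (s - s') * c + s' * (c - c') := by ring
    rw [this]
    calc |(s - s') * c + s' * (c - c')| ≤ |(s - s') * c| + |s' * (c - c')| := abs_add_le _ _
      _ = |s - s'| * |c| + |s'| * |c - c'| := by rw [abs_mul, abs_mul]
      _ ≤ d * 1 + 1 * d := by
          have := abs_nonneg (s - s')
          have := abs_nonneg (c - c')
          nlinarith
      _ = 2 * d := by ring
  have h2 : |Real.sin (p 0) * Real.cos (p 1) - Real.sin (q 0) * Real.cos (q 1)| ≤ 2 * d :=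
    key _ _ _ _ (Real.abs_sin_le_one _) (Real.abs_sin_le_one _)
      (Real.abs_cos_le_one _) (Real.abs_cos_le_one _) hsin0 hcos1
  have h3 : |Real.sin (p 0) * Real.sin (p 1) - Real.sin (q 0) * Real.sin (q 1)| ≤ 2 * d :=
    key _ _ _ _ (Real.abs_sin_le_one _) (Real.abs_sin_le_one _)
      (Real.abs_sin_le_one _) (Real.abs_sin_le_one _) hsin0 hsin1
  have hdist : dist (sphCoord p) (sphCoord q)
      = Real.sqrt ((Real.cos (p 0) - Real.cos (q 0))^2
        + ((Real.sin (p 0) * Real.cos (p 1) - Real.sin (q 0) * Real.cos (q 1))^2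
        + ((Real.sin (p 0) * Real.sin (p 1) - Real.sin (q 0) * Real.sin (q 1))^2 + 0))) := by
    rw [EuclideanSpace.dist_eq]
    congr 1
    rw [Fin.sum_univ_three]
    simp [sphCoord, Real.dist_eq, sq_abs]
    ring
  rw [hdist]
  have hle : (Real.cos (p 0) - Real.cos (q 0))^2
        + ((Real.sin (p 0) * Real.cos (p 1) - Real.sin (q 0) * Real.cos (q 1))^2
        + ((Real.sin (p 0) * Real.sin (p 1) - Real.sin (q 0) * Real.sin (q 1))^2 + 0))
        ≤ (3 * d)^2 := by
    nlinarith [abs_nonneg (Real.cos (p 0) - Real.cos (q 0)), sq_abs (Real.cos (p 0) - Real.cos (q 0)),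
      sq_abs (Real.sin (p 0) * Real.cos (p 1) - Real.sin (q 0) * Real.cos (q 1)),
      sq_abs (Real.sin (p 0) * Real.sin (p 1) - Real.sin (q 0) * Real.sin (q 1)),
      abs_nonneg (Real.sin (p 0) * Real.cos (p 1) - Real.sin (q 0) * Real.cos (q 1)),
      abs_nonneg (Real.sin (p 0) * Real.sin (p 1) - Real.sin (q 0) * Real.sin (q 1))]
  have : Real.sqrt ((3 * d)^2) = 3 * d := Real.sqrt_sq (by positivity)
  have h9 := Real.sqrt_le_sqrt hle
  rw [this] at h9
  refine h9.trans (le_of_eq ?_)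
  norm_num

lemma sph_subset_image :
    sphS ⊆ sphCoord '' (Metric.closedBall 0 4) := by
  intro y hy
  have hnorm : ‖y‖ = 1 := by simpa [sphS] using hy
  have hsum : (y 0)^2 + (y 1)^2 + (y 2)^2 = 1 := by
    have h := congrArg (fun r => r^2) (EuclideanSpace.norm_eq y ▸ hnorm)
    simp only at h
    rw [Real.sq_sqrt (by positivity)] at h
    rw [Fin.sum_univ_three] at h
    simpa [sq_abs] using h
  have hy0 : (y 0)^2 ≤ 1 := by nlinarith [sq_nonneg (y 1), sq_nonneg (y 2)]
  have hy0' : -1 ≤ y 0 ∧ y 0 ≤ 1 := abs_le.mp (abs_le_one_iff_mul_self_le_one.mpr (by nlinarith))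
  set θ := Real.arccos (y 0) with hθ
  have hcosθ : Real.cos θ = y 0 := Real.cos_arccos hy0'.1 hy0'.2
  set r := Real.sqrt ((y 1)^2 + (y 2)^2) with hr
  have hsinθ : Real.sin θ = r := by
    rw [hθ, Real.sin_arccos, hr]
    congr 1
    nlinarith
  have hθmem : θ ∈ Set.Icc 0 Real.pi := ⟨Real.arccos_nonneg _, Real.arccos_le_pi _⟩
  have hpi4 : Real.pi ≤ 4 := Real.pi_le_four
  by_cases hr0 : r = 0
  · have h12 : (y 1)^2 + (y 2)^2 = 0 := by
      have h := Real.sq_sqrt (show (0:ℝ) ≤ (y 1)^2 + (y 2)^2 by positivity)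
      rw [← hr, hr0] at h
      simpa using h.symm
    have hy1 : y 1 = 0 := by nlinarith [sq_nonneg (y 1), sq_nonneg (y 2)]
    have hy2 : y 2 = 0 := by nlinarith [sq_nonneg (y 1), sq_nonneg (y 2)]
    refine ⟨![θ, 0], ?_, ?_⟩
    · rw [Metric.mem_closedBall, dist_zero_right]
      rw [pi_norm_le_iff_of_nonneg (by norm_num)]
      intro i; fin_cases i <;> simp [abs_le] <;> constructor <;> nlinarith [hθmem.1, hθmem.2]
    · ext i
      fin_cases i <;> simp [sphCoord, hcosθ, hsinθ, hr0, hy1, hy2]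
  · set z : ℂ := ⟨y 1, y 2⟩ with hz
    have hzabs : ‖z‖ = r := by
      rw [Complex.norm_def, Complex.normSq_apply, hr]
      norm_num [hz]
      ring_nf
    have hzne : z ≠ 0 := by
      intro h
      apply hr0
      rw [← hzabs, h]
      simp
    set φ := Complex.arg z with hφ
    have hcosφ : Real.cos φ = y 1 / r := by
      rw [hφ, Complex.cos_arg hzne, hzabs]
    have hsinφ : Real.sin φ = y 2 / r := by
      rw [hφ, Complex.sin_arg, hzabs]
    have hφmem : -Real.pi < φ ∧ φ ≤ Real.pi := ⟨Complex.neg_pi_lt_arg z, Complex.arg_le_pi z⟩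
    refine ⟨![θ, φ], ?_, ?_⟩
    · rw [Metric.mem_closedBall, dist_zero_right]
      rw [pi_norm_le_iff_of_nonneg (by norm_num)]
      intro i; fin_cases i <;> simp [abs_le] <;> constructor <;>
        nlinarith [hθmem.1, hθmem.2, hφmem.1, hφmem.2]
    · ext i
      have hrne : r ≠ 0 := hr0
      fin_cases i <;>
        simp [sphCoord, hcosθ, hsinθ, hcosφ, hsinφ] <;>
        field_simp

lemma sph_finite : μH[2] sphS < ⊤ := by
  have h1 : μH[2] sphS ≤ μH[2] (sphCoord '' (Metric.closedBall 0 4)) :=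
    measure_mono sph_subset_image
  have h2 : μH[2] (sphCoord '' (Metric.closedBall 0 4))
      ≤ (3 : ℝ≥0∞) ^ (2:ℝ) * μH[2] (Metric.closedBall (0 : Fin 2 → ℝ) 4) :=
    sphCoord_lipschitz.hausdorffMeasure_image_le (by norm_num) _
  have h3 : (μH[2] : Measure (Fin 2 → ℝ)) = volume := by
    have := MeasureTheory.hausdorffMeasure_pi_real (ι := Fin 2)
    simpa using this
  have h4 : (volume (Metric.closedBall (0 : Fin 2 → ℝ) 4)) < ⊤ :=
    (isCompact_closedBall _ _).measure_lt_top
  calc μH[2] sphS ≤ (3 : ℝ≥0∞) ^ (2:ℝ) * μH[2] (Metric.closedBall (0 : Fin 2 → ℝ) 4) :=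
        h1.trans h2
    _ < ⊤ := by
        rw [h3]
        exact ENNReal.mul_lt_top (by simp [ENNReal.rpow_natCast]) h4

end Aux

/-- **Toroidal fields are silent.** For any `C¹` function `f : ℝ³ → ℝ`, the tangential
field `y ↦ y × ∇f(y)` on the unit sphere produces a vanishing magnetic potential at
every point off the sphere. -/
theorem toroidal_field_silent (f : E3 → ℝ) (hf : ContDiff ℝ 1 f) :
    ∀ x : E3, ‖x‖ ≠ 1 →
      (∫ y in sphS,
        ⟪cross3 y (gradient f y), (‖x - y‖ ^ 3)⁻¹ • (x - y)⟫ ∂μH[2]) = 0 := by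
  intro x hx
  classical
  set μ : Measure E3 := μH[2].restrict sphS with hμ
  haveI : IsFiniteMeasure μ := ⟨by rw [hμ, Measure.restrict_apply_univ]; exact sph_finite⟩
  have hs : MeasurableSet sphS := Metric.isClosed_sphere.measurableSet
  -- the weight
  set w : E3 → ℝ := fun y => (‖x - y‖ ^ 3)⁻¹ with hw
  have hw_meas : Measurable w := by
    apply Measurable.inv
    exact ((continuous_const.sub continuous_id).norm.pow 3).measurable
  -- gradient continuity
  have grad_eq : ∀ y, gradient f y = (InnerProductSpace.toDual ℝ E3).symm (fderiv ℝ f y) :=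
    fun _ => rfl
  have grad_cont : Continuous (gradient f) := by
    have h1 : Continuous (fderiv ℝ f) := hf.continuous_fderiv one_ne_zero
    exact (InnerProductSpace.toDual ℝ E3).symm.continuous.comp h1
  -- bounds on the sphere
  obtain ⟨Cg, hCg⟩ := (isCompact_sphere (0:E3) 1).exists_bound_of_continuousOn
    (grad_cont.continuousOn (s := Metric.sphere 0 1))
  obtain ⟨Cf, hCf⟩ := (isCompact_sphere (0:E3) 1).exists_bound_of_continuousOn
    ((hf.continuous).continuousOn (s := Metric.sphere 0 1))
  set δ : ℝ := |‖x‖ - 1| with hδ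
  have hδpos : 0 < δ := abs_pos.mpr (sub_ne_zero.mpr hx)
  have hw_bound : ∀ y ∈ sphS, w y ≤ (δ ^ 3)⁻¹ ∧ 0 ≤ w y := by
    intro y hy
    have hny : ‖y‖ = 1 := by simpa [sphS] using hy
    have h1 : δ ≤ ‖x - y‖ := by
      have := abs_norm_sub_norm_le x y
      rw [hny] at this
      exact this
    have h2 : δ ^ 3 ≤ ‖x - y‖ ^ 3 := pow_le_pow_left₀ hδpos.le h1 3
    constructor
    · exact inv_anti₀ (by positivity) h2
    · positivity
  -- the family and its derivative
  set F : ℝ → E3 → ℝ := fun t y => f (Rot x t y) * w y with hF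
  set F' : ℝ → E3 → ℝ :=
    fun t y => ⟪gradient f (Rot x t y), cross3 x (Rot x t y)⟫ * w y with hF'
  -- measurability of each F t
  have hFmeas : ∀ t, AEStronglyMeasurable (F t) μ := by
    intro t
    exact ((hf.continuous.comp (Rot x t).continuous).measurable.mul hw_meas).aestronglyMeasurable
  have hsph_mem : ∀ t (y : E3), y ∈ sphS → Rot x t y ∈ Metric.sphere (0:E3) 1 := by
    intro t y hy
    have hny : ‖y‖ = 1 := by simpa [sphS] using hy
    simp [Rot_norm, hny]
  -- integrability of F 0
  have hFint : Integrable (F 0) μ := by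
    refine Integrable.mono' (integrable_const (|Cf| * (δ ^ 3)⁻¹)) (hFmeas 0) ?_
    rw [hμ, ae_restrict_iff' hs]
    refine ae_of_all _ fun y hy => ?_
    have hb := hw_bound y hy
    have hfy : |f (Rot x 0 y)| ≤ |Cf| := by
      refine (hCf _ (hsph_mem 0 y hy)).trans (le_abs_self Cf) |>.trans' ?_
      exact le_of_eq (by rw [Real.norm_eq_abs])
    rw [hF]
    simp only [Real.norm_eq_abs, abs_mul]
    have : |w y| = w y := abs_of_nonneg hb.2
    rw [this]
    exact mul_le_mul hfy hb.1 hb.2 (abs_nonneg _)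
  have hF'meas : AEStronglyMeasurable (F' 0) μ := by
    apply Measurable.aestronglyMeasurable
    apply Measurable.mul _ hw_meas
    apply Continuous.measurable
    have hc1 : Continuous fun y => gradient f (Rot x 0 y) :=
      grad_cont.comp (Rot x 0).continuous
    have hc2 : Continuous fun y => cross3 x (Rot x 0 y) := by
      have : Continuous fun y => crossCLM x (Rot x 0 y) :=
        (crossCLM x).continuous.comp (Rot x 0).continuous
      simpa [crossCLM_apply] using this
    exact hc1.inner hc2
  -- uniform bound on the derivative family
  set C : ℝ := |Cg| * ‖crossCLM x‖ * (δ ^ 3)⁻¹ with hC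
  have h_bound : ∀ᵐ y ∂μ, ∀ t ∈ Metric.ball (0:ℝ) 1, ‖F' t y‖ ≤ C := by
    rw [hμ, ae_restrict_iff' hs]
    refine ae_of_all _ fun y hy => ?_
    intro t _
    have hb := hw_bound y hy
    have hz := hsph_mem t y hy
    set z := Rot x t y with hzdef
    have h1 : |⟪gradient f z, cross3 x z⟫| ≤ |Cg| * ‖crossCLM x‖ := by
      refine (abs_real_inner_le_norm _ _).trans ?_
      have hg : ‖gradient f z‖ ≤ |Cg| := (hCg z hz).trans (le_abs_self _)
      have hcr : ‖cross3 x z‖ ≤ ‖crossCLM x‖ := by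
        have := (crossCLM x).le_opNorm z
        rw [crossCLM_apply] at this
        have hnz : ‖z‖ = 1 := by simpa using hz
        simpa [hnz] using this
      exact mul_le_mul hg hcr (norm_nonneg _) (abs_nonneg _)
    rw [hF']
    simp only [Real.norm_eq_abs, abs_mul]
    rw [abs_of_nonneg hb.2, hC]
    exact mul_le_mul h1 hb.1 hb.2 (by positivity)
  -- differentiability in t
  have h_diff : ∀ᵐ y ∂μ, ∀ t ∈ Metric.ball (0:ℝ) 1, HasDerivAt (F · y) (F' t y) t := by
    refine ae_of_all _ fun y => ?_
    intro t _
    have hrot : HasDerivAt (fun t : ℝ => Rot x t y) (crossCLM x (Rot x t y)) t :=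
      hasDerivAt_Rot x t y
    have hdf : HasFDerivAt f
        (InnerProductSpace.toDual ℝ E3 (gradient f (Rot x t y))) (Rot x t y) :=
      ((hf.differentiable one_ne_zero) (Rot x t y)).hasGradientAt.hasFDerivAt
    have hcomp := hdf.comp_hasDerivAt t hrot
    have : HasDerivAt (fun t : ℝ => f (Rot x t y))
        (⟪gradient f (Rot x t y), cross3 x (Rot x t y)⟫) t := by
      have heq : (InnerProductSpace.toDual ℝ E3 (gradient f (Rot x t y)))
          (crossCLM x (Rot x t y))
          = ⟪gradient f (Rot x t y), cross3 x (Rot x t y)⟫ := by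
        rw [InnerProductSpace.toDual_apply_apply, crossCLM_apply]
      rw [← heq]
      exact hcomp
    exact this.mul_const (w y)
  -- differentiate under the integral
  have hkey := hasDerivAt_integral_of_dominated_loc_of_deriv_le (Metric.ball_mem_nhds 0 zero_lt_one)
    (Filter.Eventually.of_forall hFmeas) hFint hF'meas h_bound (integrable_const C) h_diff
  -- the integral is constant in t
  have hconst : ∀ t : ℝ, (∫ y, F t y ∂μ) = ∫ y, F 0 y ∂μ := by
    intro t
    have hgt : ∀ t : ℝ, ∀ y : E3, F t y = (fun z => f z * w z) (Rot x t y) := by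
      intro t y
      have hwz : w (Rot x t y) = w y := by
        rw [hw]
        have : x - Rot x t y = Rot x t (x - y) := by
          rw [map_sub, Rot_fix]
        simp only [this, Rot_norm]
      simp only [hF]
      rw [hwz]
    have hemb : MeasurableEmbedding (⇑(Rot x t)) :=
      (RotIso x t).toHomeomorph.measurableEmbedding
    have hcv := (Rot_measurePreserving x t).integral_comp hemb (fun z => f z * w z)
    have h0 : (∫ y, F 0 y ∂μ) = ∫ z, f z * w z ∂μ := by
      refine integral_congr_ae (ae_of_all _ fun y => ?_)
      rw [hgt 0 y, Rot_zero]
    rw [h0, ← hcv]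
    exact integral_congr_ae (ae_of_all _ fun y => hgt t y)
  -- hence the derivative at 0 vanishes
  have hzero : (∫ y, F' 0 y ∂μ) = 0 := by
    have hfun : (fun t => ∫ y, F t y ∂μ) = fun _ => ∫ y, F 0 y ∂μ := funext hconst
    have h1 : HasDerivAt (fun t => ∫ y, F t y ∂μ) (∫ y, F' 0 y ∂μ) 0 := hkey.2
    have h2 : HasDerivAt (fun t => ∫ y, F t y ∂μ) 0 0 := by
      rw [hfun]; exact hasDerivAt_const _ _
    exact h1.unique h2
  -- identify the original integrand with F' 0
  rw [← hzero]
  refine integral_congr_ae (ae_of_all _ fun y => ?_)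
  simp only [hF', Rot_zero]
  rw [real_inner_smul_right]
  simp only [hw]
  rw [mul_comm]
  congr 1
  simp only [cross3, PiLp.inner_apply, RCLike.inner_apply, Fin.sum_univ_three]
  simp [EuclideanSpace.equiv, PiLp.sub_apply]
  ring
end
end
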